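/- Let g ≥ 3 be an integer and let B be a finite set with 2g elements. Then 𝔽₂^B does not contain a proper nonzero Alt(B)-invariant 𝔽₂-linear subspace of even dimension. -/

import Mathlib

open Equiv Equiv.Perm

/-- weight-two vector -/
def e2 {B : Type*} [DecidableEq B] (u v : B) : B → ZMod 2 :=
  Pi.single u 1 + Pi.single v 1

/-- The alternating group is 2-transitive when `5 ≤ |B|`. -/
lemma alt_two_trans {B : Type*} [Fintype B] [DecidableEq B]
    (h5 : 5 ≤ Fintype.card B) (a b x y : B) (hab : a ≠ b) (hxy : x ≠ y) :
    ∃ σ : Equiv.Perm B, σ ∈ alternatingGroup B ∧ σ a = x ∧ σ b = y := by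
  classical
  set f := Equiv.swap a x with hf
  have hb'x : f b ≠ x := by
    intro h
    have : b = a := by
      have := congrArg f.symm h
      simpa [hf] using this
    exact hab this.symm
  set σ0 := Equiv.swap (f b) y * f with hσ0
  have h0a : σ0 a = x := by
    have hfa : f a = x := Equiv.swap_apply_left a x
    simp only [hσ0, Equiv.Perm.mul_apply, hfa]
    exact Equiv.swap_apply_of_ne_of_ne (Ne.symm hb'x) hxy
  have h0b : σ0 b = y := by
    simp [hσ0]
  -- find two auxiliary points avoiding x y
  have hcard : 1 < (Finset.univ \ ({x, y} : Finset B)).card := by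
    have h1 : (Finset.univ \ ({x, y} : Finset B)).card =
        Fintype.card B - ({x, y} : Finset B).card := by
      rw [Finset.card_sdiff_of_subset (Finset.subset_univ _), Finset.card_univ]
    have h2 : ({x, y} : Finset B).card ≤ 2 := Finset.card_insert_le _ _ |>.trans (by simp)
    omega
  obtain ⟨c, hc, d, hd, hcd⟩ := Finset.one_lt_card.mp hcard
  simp only [Finset.mem_sdiff, Finset.mem_insert, Finset.mem_singleton] at hc hd
  have hcx : c ≠ x := fun h => hc.2 (Or.inl h)
  have hcy : c ≠ y := fun h => hc.2 (Or.inr h)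
  have hdx : d ≠ x := fun h => hd.2 (Or.inl h)
  have hdy : d ≠ y := fun h => hd.2 (Or.inr h)
  rcases Int.units_eq_one_or (Equiv.Perm.sign σ0) with hs | hs
  · exact ⟨σ0, Equiv.Perm.mem_alternatingGroup.mpr hs, h0a, h0b⟩
  · refine ⟨Equiv.swap c d * σ0, ?_, ?_, ?_⟩
    · rw [Equiv.Perm.mem_alternatingGroup]
      simp [Equiv.Perm.sign_swap hcd, hs]
    · simp [h0a, Equiv.swap_apply_of_ne_of_ne (Ne.symm hcx) (Ne.symm hdx)]
    · simp [h0b, Equiv.swap_apply_of_ne_of_ne (Ne.symm hcy) (Ne.symm hdy)]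

/-- Let `g ≥ 3` and let `B` be a finite set with `2g` elements. Then `𝔽₂^B` contains no
proper nonzero `Alt(B)`-invariant `𝔽₂`-linear subspace of even dimension.  Here `Alt(B)`
acts on `𝔽₂^B` by `(σ · φ)(b) = φ(σ⁻¹ b)`. -/
theorem alt_invariant_subspace_not_even {B : Type*} [Fintype B] [DecidableEq B]
    (g : ℕ) (hg : 3 ≤ g) (hB : Fintype.card B = 2 * g)
    (W : Submodule (ZMod 2) (B → ZMod 2))
    (hinv : ∀ σ ∈ alternatingGroup B, ∀ φ ∈ W, (fun b => φ (σ⁻¹ b)) ∈ W)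
    (hbot : W ≠ ⊥) (htop : W ≠ ⊤) :
    ¬ Even (Module.finrank (ZMod 2) W) := by
  classical
  intro heven
  have h5 : 5 ≤ Fintype.card B := by omega
  have hWne : Module.finrank (ZMod 2) W ≠ 0 := by
    intro h
    exact hbot (Submodule.finrank_eq_zero.mp h)
  by_cases hconst : ∀ φ ∈ W, ∀ a b : B, φ a = φ b
  · -- W is contained in the constants, so finrank W ≤ 1
    have hBne : Nonempty B := Fintype.card_pos_iff.mp (by omega)
    obtain ⟨b0⟩ := hBne
    have hle : W ≤ Submodule.span (ZMod 2) {fun _ : B => (1 : ZMod 2)} := by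
      intro φ hφ
      have : φ = φ b0 • (fun _ : B => (1 : ZMod 2)) := by
        funext t; simp [hconst φ hφ t b0]
      rw [this]
      exact Submodule.smul_mem _ _ (Submodule.subset_span rfl)
    have h1 : Module.finrank (ZMod 2) W ≤ 1 := by
      calc Module.finrank (ZMod 2) W
          ≤ Module.finrank (ZMod 2)
              (Submodule.span (ZMod 2) {fun _ : B => (1 : ZMod 2)}) :=
            Submodule.finrank_mono hle
        _ ≤ 1 := by
            have hne : (fun _ : B => (1 : ZMod 2)) ≠ 0 := by
              intro h
              have := congrFun h b0
              simpa using this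
            rw [finrank_span_singleton hne]
    obtain ⟨r, hr⟩ := heven
    omega
  · push_neg at hconst
    obtain ⟨φ, hφW, a, b, hab⟩ := hconst
    -- WLOG φ a = 1, φ b = 0
    have hab' : a ≠ b := fun h => hab (by rw [h])
    obtain ⟨a, b, hab', hφa, hφb⟩ :
        ∃ a b : B, a ≠ b ∧ φ a = 1 ∧ φ b = 0 := by
      have h2 : ∀ z : ZMod 2, z = 0 ∨ z = 1 := by decide
      rcases h2 (φ a) with h | h
      · rcases h2 (φ b) with h' | h'
        · exact absurd (h.trans h'.symm) hab
        · exact ⟨b, a, hab'.symm, h', h⟩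
      · rcases h2 (φ b) with h' | h'
        · exact ⟨a, b, hab', h, h'⟩
        · exact absurd (h.trans h'.symm) hab
    -- find c distinct from a, b
    have hcard2 : 0 < (Finset.univ \ ({a, b} : Finset B)).card := by
      have h1 : (Finset.univ \ ({a, b} : Finset B)).card =
          Fintype.card B - ({a, b} : Finset B).card := by
        rw [Finset.card_sdiff_of_subset (Finset.subset_univ _), Finset.card_univ]
      have h2 : ({a, b} : Finset B).card ≤ 2 := Finset.card_insert_le _ _ |>.trans (by simp)
      omega
    obtain ⟨c, hc⟩ := Finset.card_pos.mp hcard2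
    simp only [Finset.mem_sdiff, Finset.mem_insert, Finset.mem_singleton] at hc
    have hca : c ≠ a := fun h => hc.2 (Or.inl h)
    have hcb : c ≠ b := fun h => hc.2 (Or.inr h)
    -- the 3-cycle a → b → c → a
    set σ := Equiv.swap a c * Equiv.swap a b with hσdef
    have hσmem : σ ∈ alternatingGroup B := by
      rw [Equiv.Perm.mem_alternatingGroup]
      simp [hσdef, Equiv.Perm.sign_swap hca.symm, Equiv.Perm.sign_swap hab']
    have hσinv : ∀ t : B, σ⁻¹ t = (Equiv.swap a b) ((Equiv.swap a c) t) := by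
      intro t; simp [hσdef]
    have hinva : σ⁻¹ a = c := by
      rw [hσinv, Equiv.swap_apply_left, Equiv.swap_apply_of_ne_of_ne hca hcb]
    have hinvb : σ⁻¹ b = a := by
      rw [hσinv, Equiv.swap_apply_of_ne_of_ne (Ne.symm hab') (Ne.symm hcb), Equiv.swap_apply_right]
    have hinvc : σ⁻¹ c = b := by
      rw [hσinv, Equiv.swap_apply_right, Equiv.swap_apply_left]
    have hinvother : ∀ t : B, t ≠ a → t ≠ b → t ≠ c → σ⁻¹ t = t := by
      intro t ha hb hc'
      rw [hσinv, Equiv.swap_apply_of_ne_of_ne ha hc', Equiv.swap_apply_of_ne_of_ne ha hb]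
    set ψ : B → ZMod 2 := φ + fun t => φ (σ⁻¹ t) with hψdef
    have hψW : ψ ∈ W := W.add_mem hφW (hinv σ hσmem φ hφW)
    -- ψ is a weight-two vector
    have hweight2 : ∃ u v : B, u ≠ v ∧ e2 u v ∈ W := by
      have h2 : ∀ z : ZMod 2, z = 0 ∨ z = 1 := by decide
      rcases h2 (φ c) with hφc | hφc
      · refine ⟨a, b, hab', ?_⟩
        have : e2 a b = ψ := by
          funext t
          by_cases hta : t = a
          · subst hta
            simp [e2, hψdef, hinva, hφa, hφc, Pi.single_apply, hab', CharTwo.add_self_eq_zero, -Equiv.Perm.coe_inv]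
          · by_cases htb : t = b
            · subst htb
              simp [e2, hψdef, hinvb, hφa, hφb, Pi.single_apply, Ne.symm hab', CharTwo.add_self_eq_zero, -Equiv.Perm.coe_inv]
            · by_cases htc : t = c
              · subst htc
                simp [e2, hψdef, hinvc, hφb, hφc, Pi.single_apply, Ne.symm hca, Ne.symm hcb, CharTwo.add_self_eq_zero, -Equiv.Perm.coe_inv]
              · simp [e2, hψdef, hinvother t hta htb htc, Pi.single_apply, hta, htb, CharTwo.add_self_eq_zero, -Equiv.Perm.coe_inv]
        rw [this]; exact hψW
      · refine ⟨b, c, (fun h => hcb h.symm), ?_⟩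
        have : e2 b c = ψ := by
          funext t
          by_cases hta : t = a
          · subst hta
            simp [e2, hψdef, hinva, hφa, hφc, Pi.single_apply, hab', hca, CharTwo.add_self_eq_zero, -Equiv.Perm.coe_inv]
          · by_cases htb : t = b
            · subst htb
              simp [e2, hψdef, hinvb, hφa, hφb, Pi.single_apply, hcb, CharTwo.add_self_eq_zero, -Equiv.Perm.coe_inv]
            · by_cases htc : t = c
              · subst htc
                simp [e2, hψdef, hinvc, hφb, hφc, Pi.single_apply, Ne.symm hcb, CharTwo.add_self_eq_zero, -Equiv.Perm.coe_inv]
              · simp [e2, hψdef, hinvother t hta htb htc, Pi.single_apply, htb, htc, CharTwo.add_self_eq_zero, -Equiv.Perm.coe_inv]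
        rw [this]; exact hψW
    obtain ⟨u, v, huv, huvW⟩ := hweight2
    -- transport: every weight-two vector is in W
    have hall : ∀ x y : B, x ≠ y → e2 x y ∈ W := by
      intro x y hxy
      obtain ⟨τ, hτmem, hτu, hτv⟩ := alt_two_trans h5 u v x y huv hxy
      have := hinv τ hτmem _ huvW
      have heq : (fun t => e2 u v (τ⁻¹ t)) = e2 x y := by
        funext t
        have h1 : τ⁻¹ t = u ↔ t = x := by
          rw [← hτu, Equiv.Perm.inv_eq_iff_eq]
        have h2 : τ⁻¹ t = v ↔ t = y := by
          rw [← hτv, Equiv.Perm.inv_eq_iff_eq]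
        simp only [e2, Pi.add_apply, Pi.single_apply, h1, h2]
      rwa [heq] at this
    have hall' : ∀ x y : B, e2 x y ∈ W := by
      intro x y
      by_cases h : x = y
      · subst h
        have : e2 x x = 0 := by
          funext t; simp [e2, CharTwo.add_self_eq_zero]
        rw [this]; exact W.zero_mem
      · exact hall x y h
    -- W contains all sum-zero vectors
    have hBne : Nonempty B := Fintype.card_pos_iff.mp (by omega)
    obtain ⟨b0⟩ := hBne
    have hsumzero : ∀ χ : B → ZMod 2, (∑ t, χ t) = 0 → χ ∈ W := by
      intro χ hχ
      have hrepr : χ = ∑ t, χ t • e2 b0 t := by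
        funext s
        simp only [Finset.sum_apply, Pi.smul_apply, e2, Pi.add_apply, Pi.single_apply,
          smul_eq_mul, mul_add]
        rw [Finset.sum_add_distrib]
        have hA : (∑ t, χ t * (if s = b0 then (1 : ZMod 2) else 0)) =
            (if s = b0 then (0 : ZMod 2) else 0) := by
          by_cases h : s = b0 <;> simp [h, ← Finset.sum_mul, hχ]
        have hB' : (∑ t, χ t * (if s = t then (1 : ZMod 2) else 0)) = χ s := by
          rw [Finset.sum_eq_single s]
          · simp
          · intro t _ ht; simp [Ne.symm ht]
          · intro h; exact absurd (Finset.mem_univ s) h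
        rw [hA, hB']
        by_cases h : s = b0 <;> simp [h]
      rw [hrepr]
      exact Submodule.sum_mem _ (fun t _ => Submodule.smul_mem _ _ (hall' b0 t))
    -- W together with one more vector spans everything
    have hsup : W ⊔ Submodule.span (ZMod 2) {Pi.single b0 (1 : ZMod 2)} = ⊤ := by
      rw [eq_top_iff]
      intro χ _
      by_cases h : (∑ t, χ t) = 0
      · exact Submodule.mem_sup_left (hsumzero χ h)
      · have h1 : (∑ t, χ t) = 1 := by
          have h2 : ∀ z : ZMod 2, z = 0 ∨ z = 1 := by decide
          rcases h2 (∑ t, χ t) with h' | h'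
          · exact absurd h' h
          · exact h'
        have hχ' : χ + Pi.single b0 (1 : ZMod 2) ∈ W := by
          apply hsumzero
          have hsplit : (∑ t, (χ + Pi.single b0 (1 : ZMod 2) : B → ZMod 2) t) =
              (∑ t, χ t) + ∑ t, (Pi.single b0 (1 : ZMod 2) : B → ZMod 2) t := by
            simp [Finset.sum_add_distrib]
          have hone : (∑ t, Pi.single b0 (1 : ZMod 2) t) = 1 := by
            simp [Pi.single_apply]
          rw [hsplit, h1, hone, CharTwo.add_self_eq_zero]
        have : χ = (χ + Pi.single b0 (1 : ZMod 2)) + Pi.single b0 (1 : ZMod 2) := by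
          funext t
          simp only [Pi.add_apply]
          rw [add_assoc, CharTwo.add_self_eq_zero, add_zero]
        rw [this]
        exact Submodule.add_mem _ (Submodule.mem_sup_left hχ')
          (Submodule.mem_sup_right (Submodule.subset_span rfl))
    -- finrank bounds
    have htotal : Module.finrank (ZMod 2) (B → ZMod 2) = 2 * g := by
      rw [Module.finrank_fintype_fun_eq_card, hB]
    have hlow : 2 * g ≤ Module.finrank (ZMod 2) W + 1 := by
      have h1 : Module.finrank (ZMod 2)
            (W ⊔ Submodule.span (ZMod 2) {Pi.single b0 (1 : ZMod 2)} :
              Submodule (ZMod 2) (B → ZMod 2)) ≤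
          Module.finrank (ZMod 2) W + Module.finrank (ZMod 2)
            (Submodule.span (ZMod 2) ({Pi.single b0 (1 : ZMod 2)} : Set (B → ZMod 2))) :=
        Submodule.finrank_add_le_finrank_add_finrank _ _
      rw [hsup] at h1
      have h2 : Module.finrank (ZMod 2) (⊤ : Submodule (ZMod 2) (B → ZMod 2)) = 2 * g := by
        rw [finrank_top, htotal]
      have h3 : Module.finrank (ZMod 2)
          (Submodule.span (ZMod 2) ({Pi.single b0 (1 : ZMod 2)} : Set (B → ZMod 2))) ≤ 1 := by
        have hne : (Pi.single b0 (1 : ZMod 2) : B → ZMod 2) ≠ 0 := by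
          intro h
          have := congrFun h b0
          simpa using this
        rw [finrank_span_singleton hne]
      omega
    have hhigh : Module.finrank (ZMod 2) W < 2 * g := by
      rw [← htotal]
      exact Submodule.finrank_lt htop
    obtain ⟨r, hr⟩ := heven
    omega
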